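/- Let q > 3 be a prime power and let m be a positive integer. The minimum distance of the toric code associated with the order polytope of H_m, the disjoint union of m two-element chains, is d(C_{O_{H_m}}) = (q−1)^m (q−2)^m. -/

import Mathlib

open Finset

/-- A subset `W` of `α` is an upper order ideal with respect to the order relation `le`
if it is upward closed. -/
def IsUpperIdeal {α : Type*} (le : α → α → Prop) (W : Set α) : Prop :=
  ∀ ⦃x⦄, x ∈ W → ∀ ⦃y⦄, le x y → y ∈ W

/-- The space `L_P` of sections: the `F`-span of the monomials `∏_{i ∈ W} x_i`,
where `W` ranges over the upper order ideals of the poset `(α, le)`. -/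
def monomialSpan (α : Type*) [Fintype α] (le : α → α → Prop)
    (F : Type*) [Field F] : Submodule F ((α → Fˣ) → F) :=
  Submodule.span F {g : (α → Fˣ) → F |
    ∃ W : Finset α, (∀ x ∈ W, ∀ y, le x y → y ∈ W) ∧
      g = fun x => ∏ i ∈ W, (x i : F)}

/-- The minimum distance of the toric code of the order polytope of the poset `(α, le)`
over the finite field `F`:  `(q-1)^m - max { Z(f) : f ∈ L_P, f ≠ 0 }`. -/
noncomputable def toricMinDist (α : Type*) [Fintype α] (le : α → α → Prop)
    (F : Type*) [Field F] [Fintype F] : ℕ :=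
  (Fintype.card F - 1) ^ Fintype.card α -
    sSup {n : ℕ | ∃ g ∈ monomialSpan α le F, g ≠ 0 ∧
      n = Nat.card {x : α → Fˣ // g x = 0}}

/-- The order relation of `H_m`, the disjoint union of `m` two-element chains, on
`Fin (2*m)`: the only strict relations are `ε_i < ε_{m+i}` for `i = 1, …, m`. -/
def hmLE (m : ℕ) : Fin (2 * m) → Fin (2 * m) → Prop :=
  fun a b => a = b ∨ (a.val < m ∧ b.val = a.val + m)

section Aux
variable {F : Type} [Field F] [Fintype F] [DecidableEq F]

/-- counting helper: subtype of a product counted fiberwise -/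
lemma nat_card_prod {X Y : Type*} [Fintype X] [Fintype Y] (P : X → Y → Prop) :
    Nat.card {p : X × Y // P p.1 p.2} = ∑ x : X, Nat.card {y : Y // P x y} := by
  classical
  rw [Nat.card_eq_fintype_card,
    Fintype.card_congr (Equiv.subtypeProdEquivSigmaSubtype P), Fintype.card_sigma]
  simp [Nat.card_eq_fintype_card]

lemma nat_card_compl {X : Type*} [Fintype X] (p : X → Prop) :
    Nat.card {x // ¬ p x} = Fintype.card X - Nat.card {x // p x} := by
  classical
  simp [Nat.card_eq_fintype_card, Fintype.card_subtype_compl]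

lemma nat_card_self_compl {X : Type*} [Fintype X] (p : X → Prop) :
    Nat.card {x // p x} = Fintype.card X - Nat.card {x // ¬ p x} := by
  classical
  have h := nat_card_compl (p := fun x : X => ¬ p x)
  have h2 : Nat.card {x // ¬ ¬ p x} = Nat.card {x // p x} :=
    Nat.card_congr (Equiv.subtypeEquivRight (fun x => not_not))
  have h3 : Nat.card {x : X // ¬ p x} ≤ Fintype.card X := by
    rw [Nat.card_eq_fintype_card]; exact Fintype.card_subtype_le _
  omega

/-- at most one unit solves an affine equation with nonzero slope, so
at least `N - 1` units avoid it -/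
lemma card_affine (u w : F) (h : u ≠ 0 ∨ w ≠ 0) :
    Fintype.card Fˣ - 1 ≤ Nat.card {b : Fˣ // ¬ (u + w * b = 0)} := by
  classical
  rcases eq_or_ne w 0 with hw | hw
  · have hu : u ≠ 0 := h.resolve_right (by simp [hw])
    have hall : ∀ b : Fˣ, ¬ (u + w * b = 0) := by intro b; simp [hw, hu]
    have : Nat.card {b : Fˣ // ¬ (u + w * b = 0)} = Fintype.card Fˣ := by
      rw [Nat.card_congr (Equiv.subtypeUnivEquiv hall), Nat.card_eq_fintype_card]
    omega
  · have hz : Nat.card {b : Fˣ // u + w * b = 0} ≤ 1 := by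
      rw [Nat.card_eq_fintype_card]
      apply Fintype.card_le_one_iff_subsingleton.mpr
      constructor
      rintro ⟨a, ha⟩ ⟨b, hb⟩
      have hab : w * (a : F) = w * b := by
        have h1 := ha.trans hb.symm
        exact add_left_cancel h1
      have : (a : F) = b := mul_left_cancel₀ hw hab
      exact Subtype.ext (Units.ext this)
    have hcompl := nat_card_compl (p := fun b : Fˣ => u + w * b = 0)
    omega





def Efun (F : Type) [Field F] : Fin 3 → (Fˣ × Fˣ → F) :=
  ![fun _ => 1, fun p => ((p.2 : F)), fun p => ((p.1 : F)) * ((p.2 : F))]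

def Lspan (F : Type) [Field F] (n : ℕ) : Submodule F ((Fin n → Fˣ × Fˣ) → F) :=
  Submodule.span F {g | ∃ c : Fin n → Fin 3, g = fun x => ∏ i, Efun F (c i) (x i)}


lemma chain_bound (g : Fˣ × Fˣ → F)
    (hg : g ∈ Submodule.span F (Set.range (Efun F))) (hg0 : g ≠ 0) :
    Fintype.card Fˣ * (Fintype.card Fˣ - 1) ≤ Nat.card {p : Fˣ × Fˣ // g p ≠ 0} := by
  classical
  obtain ⟨c, hc⟩ := (Submodule.mem_span_range_iff_exists_fun F).mp hg
  set α := c 0 with hα'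
  set β := c 1 with hβ'
  set γ := c 2 with hγ'
  have hgval : ∀ p : Fˣ × Fˣ, g p = α + (β + γ * p.1) * p.2 := by
    intro p
    rw [← hc]
    simp [Efun, Fin.sum_univ_three]
    ring
  set N := Fintype.card Fˣ with hN
  have hsplit : Nat.card {p : Fˣ × Fˣ // g p ≠ 0}
      = ∑ a : Fˣ, Nat.card {b : Fˣ // g (a, b) ≠ 0} := by
    rw [← nat_card_prod (fun a b : Fˣ => g (a, b) ≠ 0)]
  rw [hsplit]
  rcases eq_or_ne α 0 with ha0 | ha0
  · -- α = 0 : g (a,b) = (β + γ a) b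
    have hne : β ≠ 0 ∨ γ ≠ 0 := by
      by_contra h
      push_neg at h
      apply hg0
      funext p
      rw [hgval p, ha0, h.1, h.2]
      simp
    have hgood : N - 1 ≤ Nat.card {a : Fˣ // ¬ (β + γ * a = 0)} := card_affine β γ hne
    set S : Finset Fˣ := univ.filter (fun a => ¬ (β + γ * a = 0)) with hS
    have hScard : N - 1 ≤ S.card := by
      rwa [Nat.card_eq_fintype_card, Fintype.card_subtype] at hgood
    have hfiber : ∀ a ∈ S, Nat.card {b : Fˣ // g (a, b) ≠ 0} = N := by
      intro a ha
      have hw : β + γ * a ≠ 0 := by simpa [hS] using ha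
      have hall : ∀ b : Fˣ, g (a, b) ≠ 0 := by
        intro b
        rw [hgval]
        simp only [ha0, zero_add]
        exact mul_ne_zero hw (Units.ne_zero b)
      rw [Nat.card_congr (Equiv.subtypeUnivEquiv hall), Nat.card_eq_fintype_card]
    calc N * (N - 1) = (N - 1) * N := Nat.mul_comm _ _
    _ ≤ S.card * N := Nat.mul_le_mul_right N hScard
    _ = ∑ a ∈ S, N := by rw [Finset.sum_const, smul_eq_mul]
    _ = ∑ a ∈ S, Nat.card {b : Fˣ // g (a, b) ≠ 0} := (Finset.sum_congr rfl (fun a ha => (hfiber a ha).symm))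
    _ ≤ ∑ a : Fˣ, Nat.card {b : Fˣ // g (a, b) ≠ 0} :=
        Finset.sum_le_sum_of_subset (Finset.subset_univ S)
  · -- α ≠ 0 : every fiber has ≥ N - 1 nonzeros
    have hfiber : ∀ a : Fˣ, N - 1 ≤ Nat.card {b : Fˣ // g (a, b) ≠ 0} := by
      intro a
      rcases eq_or_ne (β + γ * a) 0 with hw | hw
      · have hall : ∀ b : Fˣ, g (a, b) ≠ 0 := by
          intro b; rw [hgval]; simp [hw, ha0]
        rw [Nat.card_congr (Equiv.subtypeUnivEquiv hall), Nat.card_eq_fintype_card]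
        omega
      · have := card_affine α (β + γ * a) (Or.inl ha0)
        -- {b // ¬ (α + (β+γa) * b = 0)} vs {b // g (a,b) ≠ 0}
        have heq : Nat.card {b : Fˣ // ¬ (α + (β + γ * a) * b = 0)}
            = Nat.card {b : Fˣ // g (a, b) ≠ 0} :=
          Nat.card_congr (Equiv.subtypeEquivRight (fun b => by rw [hgval]))
        omega
    calc N * (N - 1) = ∑ _a : Fˣ, (N - 1) := by rw [Finset.sum_const, smul_eq_mul, card_univ]
    _ ≤ ∑ a : Fˣ, Nat.card {b : Fˣ // g (a, b) ≠ 0} := Finset.sum_le_sum (fun a _ => hfiber a)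

lemma lspan_bound : ∀ (n : ℕ) (f : (Fin n → Fˣ × Fˣ) → F), f ∈ Lspan F n → f ≠ 0 →
    (Fintype.card Fˣ * (Fintype.card Fˣ - 1)) ^ n ≤ Nat.card {x // f x ≠ 0} := by
  intro n
  induction n with
  | zero =>
    intro f hf hf0
    have hset : {g : (Fin 0 → Fˣ × Fˣ) → F | ∃ c : Fin 0 → Fin 3,
        g = fun x => ∏ i, Efun F (c i) (x i)} = {fun _ => (1 : F)} := by
      ext g
      simp only [Set.mem_setOf_eq, Set.mem_singleton_iff]
      constructor
      · rintro ⟨c, rfl⟩; funext x; simp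
      · rintro rfl; exact ⟨finZeroElim, by funext x; simp⟩
    rw [Lspan, hset, Submodule.mem_span_singleton] at hf
    obtain ⟨k, rfl⟩ := hf
    have hk : k ≠ 0 := by
      intro h; apply hf0; rw [h]; simp
    have hall : ∀ x : Fin 0 → Fˣ × Fˣ, (k • fun _ => (1:F)) x ≠ 0 := by
      intro x; simpa using hk
    rw [Nat.card_congr (Equiv.subtypeUnivEquiv hall)]
    simp [Nat.card_eq_fintype_card]
  | succ n IH =>
    intro f hf hf0
    classical
    set N := Fintype.card Fˣ with hN
    set d := N * (N - 1) with hd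
    -- slices
    have hslice1 : ∀ b : Fˣ × Fˣ, (fun xs => f (Fin.cons b xs)) ∈ Lspan F n := by
      intro b
      have hle : Lspan F (n+1) ≤ Submodule.comap
          (LinearMap.funLeft F F (fun xs : Fin n → Fˣ × Fˣ => Fin.cons b xs)) (Lspan F n) := by
        rw [Lspan, Submodule.span_le]
        rintro g ⟨c, rfl⟩
        have hrw : (fun xs : Fin n → Fˣ × Fˣ => ∏ i : Fin (n+1), Efun F (c i) ((Fin.cons (α := fun _ => Fˣ × Fˣ) b xs) i))
            = Efun F (c 0) b • fun xs : Fin n → Fˣ × Fˣ => ∏ i : Fin n, Efun F (c i.succ) (xs i) := by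
          funext xs
          simp [Fin.prod_univ_succ]
        show (fun xs : Fin n → Fˣ × Fˣ => ∏ i : Fin (n+1), Efun F (c i) ((Fin.cons (α := fun _ => Fˣ × Fˣ) b xs) i)) ∈ Lspan F n
        rw [hrw]
        exact Submodule.smul_mem _ _ (Submodule.subset_span ⟨fun i => c i.succ, rfl⟩)
      exact hle hf
    have hslice2 : ∀ xs : Fin n → Fˣ × Fˣ,
        (fun b => f (Fin.cons b xs)) ∈ Submodule.span F (Set.range (Efun F)) := by
      intro xs
      have hle : Lspan F (n+1) ≤ Submodule.comap
          (LinearMap.funLeft F F (fun b : Fˣ × Fˣ => Fin.cons b xs))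
          (Submodule.span F (Set.range (Efun F))) := by
        rw [Lspan, Submodule.span_le]
        rintro g ⟨c, rfl⟩
        have hrw : (fun b : Fˣ × Fˣ => ∏ i : Fin (n+1), Efun F (c i) ((Fin.cons (α := fun _ => Fˣ × Fˣ) b xs) i))
            = (∏ i : Fin n, Efun F (c i.succ) (xs i)) • Efun F (c 0) := by
          funext b
          simp [Fin.prod_univ_succ, mul_comm]
        show (fun b : Fˣ × Fˣ => ∏ i : Fin (n+1), Efun F (c i) ((Fin.cons (α := fun _ => Fˣ × Fˣ) b xs) i))
            ∈ Submodule.span F (Set.range (Efun F))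
        rw [hrw]
        exact Submodule.smul_mem _ _ (Submodule.subset_span (Set.mem_range_self _))
      exact hle hf
    -- counting
    have hcount : Nat.card {x : Fin (n+1) → Fˣ × Fˣ // f x ≠ 0}
        = ∑ b : Fˣ × Fˣ, Nat.card {xs : Fin n → Fˣ × Fˣ // f (Fin.cons b xs) ≠ 0} := by
      rw [← nat_card_prod (fun (b : Fˣ × Fˣ) (xs : Fin n → Fˣ × Fˣ) => f (Fin.cons b xs) ≠ 0)]
      refine Nat.card_congr ((Fin.consEquiv (fun _ => Fˣ × Fˣ)).symm.subtypeEquiv (fun x => ?_))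
      rw [show Fin.cons ((Fin.consEquiv (fun _ => Fˣ × Fˣ)).symm x).1 ((Fin.consEquiv (fun _ => Fˣ × Fˣ)).symm x).2 = x
        from Fin.cons_self_tail x]
    rw [hcount]
    set S : Finset (Fˣ × Fˣ) := univ.filter (fun b => (fun xs => f (Fin.cons b xs)) ≠ 0) with hS
    -- S is large
    have hScard : d ≤ S.card := by
      obtain ⟨x0, hx0⟩ := Function.ne_iff.mp hf0
      have hx0' : f (Fin.cons (x0 0) (Fin.tail x0)) ≠ 0 := by
        rw [Fin.cons_self_tail]; exact hx0
      have hg2 : (fun b => f (Fin.cons b (Fin.tail x0))) ≠ 0 :=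
        Function.ne_iff.mpr ⟨x0 0, hx0'⟩
      have hb := chain_bound _ (hslice2 (Fin.tail x0)) hg2
      have hsub : Nat.card {b : Fˣ × Fˣ // f (Fin.cons b (Fin.tail x0)) ≠ 0} ≤ S.card := by
        rw [Nat.card_eq_fintype_card, Fintype.card_subtype]
        apply Finset.card_le_card
        intro b hb'
        simp only [Finset.mem_filter, Finset.mem_univ, true_and] at hb' ⊢
        rw [hS, Finset.mem_filter]
        exact ⟨Finset.mem_univ b, Function.ne_iff.mpr ⟨Fin.tail x0, hb'⟩⟩
      exact le_trans hb hsub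
    -- each fiber over S is large
    have hfiber : ∀ b ∈ S, d ^ n ≤ Nat.card {xs : Fin n → Fˣ × Fˣ // f (Fin.cons b xs) ≠ 0} := by
      intro b hb
      have hbne : (fun xs => f (Fin.cons b xs)) ≠ 0 := by
        rw [hS, Finset.mem_filter] at hb; exact hb.2
      exact IH _ (hslice1 b) hbne
    calc d ^ (n+1) = d * d ^ n := by rw [pow_succ, mul_comm]
    _ ≤ S.card * d ^ n := Nat.mul_le_mul_right _ hScard
    _ = ∑ _b ∈ S, d ^ n := by rw [Finset.sum_const, smul_eq_mul]
    _ ≤ ∑ b ∈ S, Nat.card {xs : Fin n → Fˣ × Fˣ // f (Fin.cons b xs) ≠ 0} :=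
        Finset.sum_le_sum hfiber
    _ ≤ ∑ b : Fˣ × Fˣ, Nat.card {xs : Fin n → Fˣ × Fˣ // f (Fin.cons b xs) ≠ 0} :=
        Finset.sum_le_sum_of_subset (Finset.subset_univ S)

def lo (m : ℕ) (i : Fin m) : Fin (2 * m) := ⟨i.1, by have := i.2; omega⟩
def hi (m : ℕ) (i : Fin m) : Fin (2 * m) := ⟨m + i.1, by have := i.2; omega⟩

def esum (m : ℕ) : Fin m ⊕ Fin m ≃ Fin (2 * m) where
  toFun := Sum.elim (lo m) (hi m)
  invFun j := if h : j.1 < m then .inl ⟨j.1, h⟩ else .inr ⟨j.1 - m, by have := j.2; omega⟩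
  left_inv s := by
    rcases s with i | i
    · have h : (lo m i).1 < m := i.2
      simp only [Sum.elim_inl]
      erw [dif_pos h]
      congr 1
    · have h : ¬ (hi m i).1 < m := by simp [hi]
      simp only [Sum.elim_inr]
      erw [dif_neg h]
      congr 1
      apply Fin.ext
      simp [hi]
  right_inv j := by
    dsimp only
    by_cases h : j.1 < m
    · rw [dif_pos h]; rfl
    · rw [dif_neg h]
      apply Fin.ext
      have := j.2
      simp only [Sum.elim_inr, hi]
      omega

def pmap (m : ℕ) {F : Type} [Field F] (x : Fin (2 * m) → Fˣ) : Fin m → Fˣ × Fˣ :=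
  fun i => (x (lo m i), x (hi m i))

def epmap (m : ℕ) {F : Type} [Field F] : (Fin (2 * m) → Fˣ) ≃ (Fin m → Fˣ × Fˣ) where
  toFun := pmap m
  invFun y j := if h : j.1 < m then (y ⟨j.1, h⟩).1 else (y ⟨j.1 - m, by have := j.2; omega⟩).2
  left_inv x := by
    funext j
    dsimp only
    by_cases h : j.1 < m
    · rw [dif_pos h]
      show x (lo m ⟨j.1, h⟩) = x j
      congr 1
    · rw [dif_neg h]
      show x (hi m _) = x j
      congr 1
      apply Fin.ext
      have := j.2
      simp only [hi]
      omega
  right_inv y := by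
    funext i
    show pmap m _ i = y i
    have h1 : (lo m i).1 < m := i.2
    have h2 : ¬ (hi m i).1 < m := by simp [hi]
    apply Prod.ext
    · show (if h : (lo m i).1 < m then _ else _) = (y i).1
      rw [dif_pos h1]
      exact congrArg (fun z => (z).1) (congrArg y (Fin.ext rfl))
    · show (if h : (hi m i).1 < m then ((y ⟨(hi m i).1, h⟩).1) else _) = (y i).2
      rw [dif_neg h2]
      exact congrArg (fun z => (y z).2) (Fin.ext (by simp [hi]))

variable (m : ℕ)

def cW (W : Finset (Fin (2 * m))) [DecidableEq (Fin (2 * m))] : Fin m → Fin 3 :=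
  fun i => if lo m i ∈ W then 2 else if hi m i ∈ W then 1 else 0

lemma keyId (W : Finset (Fin (2 * m)))
    (hW : ∀ x ∈ W, ∀ y, hmLE m x y → y ∈ W) (x : Fin (2 * m) → Fˣ) :
    ∏ j ∈ W, ((x j : F)) = ∏ i : Fin m, Efun F (cW m W i) (pmap m x i) := by
  classical
  have h1 : ∏ j ∈ W, ((x j : F)) = ∏ j : Fin (2 * m), (if j ∈ W then (x j : F) else 1) := by
    rw [Finset.prod_ite_mem, Finset.univ_inter]
  rw [h1, ← Equiv.prod_comp (esum m) (fun j => if j ∈ W then (x j : F) else 1),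
    Fintype.prod_sum_type]
  simp only [esum, Equiv.coe_fn_mk, Sum.elim_inl, Sum.elim_inr]
  rw [← Finset.prod_mul_distrib]
  apply Finset.prod_congr rfl
  intro i _
  have hchain : lo m i ∈ W → hi m i ∈ W := by
    intro hlo
    apply hW _ hlo
    right
    constructor
    · exact i.2
    · show (hi m i).1 = (lo m i).1 + m
      simp [hi, lo, Nat.add_comm]
  by_cases h2 : lo m i ∈ W
  · have h3 := hchain h2
    erw [if_pos h2, if_pos h3]
    simp [cW, h2, Efun, pmap]
  · by_cases h3 : hi m i ∈ W
    · erw [if_neg h2, if_pos h3]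
      simp [cW, h2, h3, Efun, pmap]
    · erw [if_neg h2, if_neg h3]
      simp [cW, h2, h3, Efun, pmap]

lemma lo_lt (i : Fin m) : (lo m i).1 < m := i.2
lemma hi_ge (i : Fin m) : ¬ (hi m i).1 < m := by simp [hi]

open Classical in
noncomputable def WofC (c : Fin m → Fin 3) : Finset (Fin (2 * m)) :=
  univ.filter (fun j => ∃ i : Fin m, (j = lo m i ∧ c i = 2) ∨ (j = hi m i ∧ c i ≠ 0))

lemma WofC_closed (c : Fin m → Fin 3) :
    ∀ x ∈ WofC m c, ∀ y, hmLE m x y → y ∈ WofC m c := by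
  classical
  intro x hx y hxy
  rcases hxy with rfl | ⟨hxm, hy⟩
  · exact hx
  · simp only [WofC, Finset.mem_filter, Finset.mem_univ, true_and] at hx ⊢
    obtain ⟨i, hi'⟩ := hx
    rcases hi' with ⟨rfl, hc⟩ | ⟨rfl, _⟩
    · refine ⟨i, Or.inr ⟨?_, by simp [hc]⟩⟩
      apply Fin.ext
      simp only [hi, lo] at hy ⊢
      omega
    · exact absurd hxm (hi_ge m i)

lemma lo_mem_WofC (c : Fin m → Fin 3) (i : Fin m) : lo m i ∈ WofC m c ↔ c i = 2 := by
  classical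
  simp only [WofC, Finset.mem_filter, Finset.mem_univ, true_and]
  constructor
  · rintro ⟨i', hi'⟩
    rcases hi' with ⟨h1, h2⟩ | ⟨h1, h2⟩
    · have : i = i' := by
        apply Fin.ext
        have := congrArg Fin.val h1
        simpa [lo] using this
      rw [this]; exact h2
    · exfalso
      have := congrArg Fin.val h1
      simp only [lo, hi] at this
      have := i.2
      omega
  · intro h; exact ⟨i, Or.inl ⟨rfl, h⟩⟩

lemma hi_mem_WofC (c : Fin m → Fin 3) (i : Fin m) : hi m i ∈ WofC m c ↔ c i ≠ 0 := by
  classical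
  simp only [WofC, Finset.mem_filter, Finset.mem_univ, true_and]
  constructor
  · rintro ⟨i', hi'⟩
    rcases hi' with ⟨h1, h2⟩ | ⟨h1, h2⟩
    · exfalso
      have := congrArg Fin.val h1
      simp only [lo, hi] at this
      have := i'.2
      omega
    · have : i = i' := by
        apply Fin.ext
        have := congrArg Fin.val h1
        simp only [hi] at this
        omega
      rw [this]; exact h2
  · intro h; exact ⟨i, Or.inr ⟨rfl, h⟩⟩

lemma cW_WofC [DecidableEq (Fin (2 * m))] (c : Fin m → Fin 3) : cW m (WofC m c) = c := by
  funext i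
  unfold cW
  have h3 : c i = 0 ∨ c i = 1 ∨ c i = 2 := by
    generalize c i = k
    rcases k with ⟨v, hv⟩
    interval_cases v <;> simp [Fin.ext_iff]
  rcases h3 with h | h | h
  · rw [if_neg, if_neg, h]
    · rw [hi_mem_WofC]; simp [h]
    · rw [lo_mem_WofC, h]; exact Fin.ne_of_val_ne (by simp)
  · rw [if_neg, if_pos, h]
    · rw [hi_mem_WofC, h]; exact Fin.ne_of_val_ne (by simp)
    · rw [lo_mem_WofC, h]; exact Fin.ne_of_val_ne (by simp)
  · rw [if_pos, h]
    rw [lo_mem_WofC]; exact h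

lemma span_eq :
    monomialSpan (Fin (2 * m)) (hmLE m) F
      = Submodule.map (LinearMap.funLeft F F (pmap m)) (Lspan F m) := by
  classical
  rw [monomialSpan, Lspan, Submodule.map_span]
  congr 1
  ext g
  constructor
  · rintro ⟨W, hW, rfl⟩
    refine ⟨fun y => ∏ i, Efun F (cW m W i) (y i), ⟨cW m W, rfl⟩, ?_⟩
    funext x
    exact (keyId m W hW x).symm
  · rintro ⟨g', ⟨c, rfl⟩, rfl⟩
    refine ⟨WofC m c, WofC_closed m c, ?_⟩
    funext x
    show (∏ i, Efun F (c i) (pmap m x i)) = ∏ j ∈ WofC m c, ((x j : F))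
    rw [keyId m (WofC m c) (WofC_closed m c) x, cW_WofC]

lemma f0_mem : (fun y : Fin m → Fˣ × Fˣ => ∏ i, (1 - ((y i).2 : F))) ∈ Lspan F m := by
  classical
  have hexp : (fun y : Fin m → Fˣ × Fˣ => ∏ i, (1 - ((y i).2 : F)))
      = ∑ t ∈ (univ : Finset (Fin m)).powerset, ((-1 : F) ^ t.card) •
          (fun y : Fin m → Fˣ × Fˣ => ∏ i : Fin m, Efun F (if i ∈ t then 1 else 0) (y i)) := by
    funext y
    have h1 : ∀ i : Fin m, (1 - ((y i).2 : F)) = (-((y i).2 : F)) + 1 := by intro i; ring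
    rw [Finset.sum_apply]
    simp only [h1]
    rw [Finset.prod_add]
    apply Finset.sum_congr rfl
    intro t _
    simp only [Pi.smul_apply, smul_eq_mul]
    rw [Finset.prod_const_one, mul_one]
    have h2 : ∏ i ∈ t, (-((y i).2 : F)) = (-1 : F) ^ t.card * ∏ i ∈ t, ((y i).2 : F) := by
      rw [show (fun i => -((y i).2 : F)) = fun i => (-1 : F) * ((y i).2 : F) by funext i; ring]
      rw [Finset.prod_mul_distrib, Finset.prod_const]
    rw [h2]
    congr 1
    have h3 : ∀ i : Fin m, Efun F (if i ∈ t then 1 else 0) (y i)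
        = if i ∈ t then ((y i).2 : F) else 1 := by
      intro i; by_cases h : i ∈ t <;> simp [h, Efun]
    rw [Finset.prod_congr rfl (fun i _ => h3 i), Finset.prod_ite_mem, Finset.univ_inter]
  rw [hexp]
  apply Submodule.sum_mem
  intro t _
  exact Submodule.smul_mem _ _ (Submodule.subset_span ⟨fun i => if i ∈ t then 1 else 0, rfl⟩)

lemma card_snd_ne_one :
    Nat.card {p : Fˣ × Fˣ // ¬ (p.2 = 1)} = Fintype.card Fˣ * (Fintype.card Fˣ - 1) := by
  classical
  have h1 := nat_card_prod (fun (_ : Fˣ) (b : Fˣ) => ¬ (b = 1))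
  have h2 : Nat.card {b : Fˣ // ¬ (b = 1)} = Fintype.card Fˣ - 1 := by
    rw [nat_card_compl (p := fun b : Fˣ => b = 1), Nat.card_eq_fintype_card,
      Fintype.card_subtype_eq]
  rw [h1] at *
  rw [Finset.sum_congr rfl (fun a _ => h2), Finset.sum_const, smul_eq_mul, card_univ]

end Aux

/-- Let `q > 3` be a prime power (realized as the cardinality of a finite
field `F`) and let `m` be a positive integer.  The minimum distance of the toric code of the
order polytope of `H_m` is `(q-1)^m * (q-2)^m`. -/
theorem stmt11 (q m : ℕ) (hq : 3 < q) (hm : 0 < m)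
    (F : Type) [Field F] [Fintype F] (hF : Fintype.card F = q) :
    toricMinDist (Fin (2 * m)) (hmLE m) F = (q - 1) ^ m * (q - 2) ^ m := by
  classical
  set N := Fintype.card Fˣ with hNdef
  have hNq : N = q - 1 := by rw [hNdef, Fintype.card_units, hF]
  have hN3 : 3 ≤ N := by omega
  set d := N * (N - 1) with hd
  have hT : Fintype.card (Fin (2 * m) → Fˣ) = N ^ (2 * m) := by
    rw [Fintype.card_fun, Fintype.card_fin]
  -- the extremal function
  set f0 : (Fin m → Fˣ × Fˣ) → F := fun y => ∏ i, (1 - ((y i).2 : F)) with hf0def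
  set g0 : (Fin (2 * m) → Fˣ) → F := LinearMap.funLeft F F (pmap m) f0 with hg0def
  have hg0mem : g0 ∈ monomialSpan (Fin (2 * m)) (hmLE m) F := by
    rw [span_eq m]
    exact Submodule.mem_map_of_mem (f0_mem m)
  obtain ⟨u, hu⟩ : ∃ u : Fˣ, u ≠ 1 := Fintype.exists_ne_of_one_lt_card (by omega) 1
  have hf0ne : f0 ≠ 0 := by
    apply Function.ne_iff.mpr
    refine ⟨fun _ => (u, u), ?_⟩
    show (∏ _i : Fin m, (1 - ((u : F)))) ≠ 0
    apply Finset.prod_ne_zero_iff.mpr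
    intro i _
    rw [sub_ne_zero]
    intro h
    exact hu (Units.ext (by rw [← h]; rfl))
  have hg0ne : g0 ≠ 0 := by
    obtain ⟨y0, hy0⟩ := Function.ne_iff.mp hf0ne
    apply Function.ne_iff.mpr ⟨(epmap m).symm y0, ?_⟩
    show f0 (pmap m ((epmap m).symm y0)) ≠ 0
    rw [show pmap m ((epmap m).symm y0) = y0 from (epmap m).right_inv y0]
    exact hy0
  -- transfer of nonzero counts
  have htrans : ∀ f : (Fin m → Fˣ × Fˣ) → F,
      Nat.card {x : Fin (2 * m) → Fˣ // LinearMap.funLeft F F (pmap m) f x ≠ 0}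
        = Nat.card {y : Fin m → Fˣ × Fˣ // f y ≠ 0} :=
    fun f => Nat.card_congr ((epmap m).subtypeEquiv (fun x => Iff.rfl))
  -- zero counts from nonzero counts
  have hzero : ∀ g : (Fin (2 * m) → Fˣ) → F,
      Nat.card {x : Fin (2 * m) → Fˣ // g x = 0}
        = N ^ (2 * m) - Nat.card {x : Fin (2 * m) → Fˣ // g x ≠ 0} := by
    intro g
    have := nat_card_self_compl (p := fun x : Fin (2 * m) → Fˣ => g x = 0)
    rw [hT] at this
    exact this
  -- the bound for every code word
  have hub : ∀ n ∈ {n : ℕ | ∃ g ∈ monomialSpan (Fin (2 * m)) (hmLE m) F, g ≠ 0 ∧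
      n = Nat.card {x : Fin (2 * m) → Fˣ // g x = 0}}, n ≤ N ^ (2 * m) - d ^ m := by
    rintro n ⟨g, hgmem, hgne, rfl⟩
    rw [span_eq m] at hgmem
    obtain ⟨f, hfmem, rfl⟩ := hgmem
    have hfne : f ≠ 0 := by
      rintro rfl
      rw [map_zero] at hgne
      exact hgne rfl
    have hlow : d ^ m ≤ Nat.card
        {x : Fin (2 * m) → Fˣ // LinearMap.funLeft F F (pmap m) f x ≠ 0} := by
      rw [htrans f]
      exact lspan_bound m f hfmem hfne
    rw [hzero]
    omega
  -- the zero count of g0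
  have hcnt0 : Nat.card {x : Fin (2 * m) → Fˣ // g0 x ≠ 0} = d ^ m := by
    rw [hg0def, htrans f0]
    have hne_iff : ∀ y : Fin m → Fˣ × Fˣ, (f0 y ≠ 0) ↔ ∀ i : Fin m, ¬ ((y i).2 = (1 : Fˣ)) := by
      intro y
      rw [hf0def]
      show (∏ i, (1 - ((y i).2 : F))) ≠ 0 ↔ _
      rw [Finset.prod_ne_zero_iff]
      apply forall_congr'
      intro i
      simp only [Finset.mem_univ, true_implies, sub_ne_zero]
      rw [ne_comm, Ne, Units.val_eq_one]
    rw [Nat.card_congr (Equiv.subtypeEquivRight hne_iff),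
      Nat.card_congr (Equiv.subtypePiEquivPi (p := fun (_ : Fin m) (b : Fˣ × Fˣ) => ¬ (b.2 = 1))),
      Nat.card_pi]
    rw [Finset.prod_congr rfl (fun i _ => card_snd_ne_one (F := F)), Finset.prod_const,
      card_univ, Fintype.card_fin]
  have hZmem : N ^ (2 * m) - d ^ m ∈ {n : ℕ | ∃ g ∈ monomialSpan (Fin (2 * m)) (hmLE m) F,
      g ≠ 0 ∧ n = Nat.card {x : Fin (2 * m) → Fˣ // g x = 0}} :=
    ⟨g0, hg0mem, hg0ne, by rw [hzero g0, hcnt0]⟩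
  have hA : d ^ m = N ^ m * (N - 1) ^ m := by rw [hd, mul_pow]
  have hT2 : N ^ (2 * m) = N ^ m * N ^ m := by
    rw [show 2 * m = m + m from two_mul m, pow_add]
  have hB : (N - 1) ^ m ≤ N ^ m := Nat.pow_le_pow_left (by omega) m
  have hAB : N ^ m * (N - 1) ^ m ≤ N ^ m * N ^ m := Nat.mul_le_mul_left _ hB
  have hq1 : (q - 1) ^ m = N ^ m := by rw [hNq]
  have hq2 : (q - 2) ^ m = (N - 1) ^ m := by
    have h' : q - 2 = N - 1 := by omega
    rw [h']
  have hcard : Fintype.card F - 1 = N := by rw [hNdef, Fintype.card_units]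
  have hsup : sSup {n : ℕ | ∃ g ∈ monomialSpan (Fin (2 * m)) (hmLE m) F, g ≠ 0 ∧
      n = Nat.card {x : Fin (2 * m) → Fˣ // g x = 0}} = N ^ (2 * m) - d ^ m :=
    le_antisymm (csSup_le ⟨_, hZmem⟩ hub) (le_csSup ⟨_, hub⟩ hZmem)
  unfold toricMinDist
  rw [hsup, Fintype.card_fin, hcard, hq1, hq2, hA, hT2]
  exact Nat.sub_sub_self hAB
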